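/- Let (G,w) be a weighted graph with girth g = g(G), and let C₁ and C₂ be two distinct shortest cycles of G (each of weight g) sharing at least one vertex. Then either C₁ and C₂ touch (their intersection graph C₁ ∩ C₂ is a path, possibly a single vertex), or there exist two distinct vertices s and t such that V(C₁) ∩ V(C₂) = {s,t}, the distance between s and t along each of C₁ and C₂ is g/2 (both arcs of each cycle between s and t have weight g/2), and C₁ = P₁ ∪ P₂ and C₂ = Q₁ ∪ Q₂ where P₁, P₂, Q₁, Q₂ are four pairwise distinct, pairwise internally vertex-disjoint s–t paths, each of weight g/2. -/

import Mathlib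

open SimpleGraph

namespace Stmt12Aux

set_option linter.unusedSectionVars false
set_option maxHeartbeats 1600000

variable {V : Type*} [DecidableEq V] {X : SimpleGraph V} {G : SimpleGraph V}

lemma one_le_weight (w : Sym2 V → ℕ) (hw : ∀ e ∈ G.edgeSet, 0 < w e)
    {u v : V} (p : G.Walk u v) (h : u ≠ v) : 1 ≤ (p.edges.map w).sum := by
  cases p with
  | nil => exact absurd rfl h
  | cons h' p' =>
    simp only [Walk.edges_cons, List.map_cons, List.sum_cons]
    have := hw _ (G.mem_edgeSet.mpr h')
    omega


lemma isCycle_reverse {u : V} {c : G.Walk u u} (hc : c.IsCycle) : c.reverse.IsCycle := by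
  rw [Walk.isCycle_def] at hc ⊢
  refine ⟨hc.1.reverse, fun h => hc.2.1 (by simpa using congrArg Walk.reverse h), ?_⟩
  have e1 : c.support.tail.reverse ++ [u] = u :: c.reverse.support.tail := by
    calc c.support.tail.reverse ++ [u] = (u :: c.support.tail).reverse := by rw [List.reverse_cons]
      _ = c.support.reverse := by rw [← c.support_eq_cons]
      _ = c.reverse.support := (c.support_reverse).symm
      _ = u :: c.reverse.support.tail := c.reverse.support_eq_cons
  have hnd := hc.2.2
  rcases hL : c.support.tail.reverse with _ | ⟨a, R⟩
  · rw [hL] at e1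
    simp only [List.nil_append, List.cons.injEq] at e1
    rw [← e1.2]
    simp
  · rw [hL] at e1
    simp only [List.cons_append, List.cons.injEq] at e1
    obtain ⟨e2, e3⟩ := e1
    rw [← e3]
    have hn : (a :: R).Nodup := by rw [← hL]; exact (List.nodup_reverse).2 hnd
    subst e2
    exact ((List.perm_append_singleton a R).nodup_iff).2 hn


lemma not_nil_of_ne {u v : V} {p : X.Walk u v} (h : u ≠ v) : ¬ p.Nil := by
  cases p with
  | nil => exact absurd rfl h
  | cons h' p' => simp

lemma edge_at_head {a v : V} (p : X.Walk a v) (hp : p.IsPath) {e : Sym2 V}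
    (he : e ∈ p.edges) (ha : a ∈ e) :
    ∃ (b : V) (h : X.Adj a b) (q : X.Walk b v), p = Walk.cons h q ∧ e = s(a, b) := by
  cases p with
  | nil => simp at he
  | cons h' q =>
    rename_i b'
    rw [Walk.edges_cons, List.mem_cons] at he
    rcases he with he | he
    · exact ⟨b', h', q, rfl, by rw [he]⟩
    · exfalso
      obtain ⟨c, rfl⟩ := Sym2.mem_iff_exists.1 ha
      have : a ∈ q.support := q.fst_mem_support_of_mem_edges he
      exact ((Walk.cons_isPath_iff h' q).1 hp).2 this

lemma interior_neighbors {u v y : V} (p : X.Walk u v) (hp : p.IsPath)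
    (hy : y ∈ p.support) (hyu : y ≠ u) (hyv : y ≠ v) :
    ∃ w₁ w₂ : V, w₁ ≠ w₂ ∧ s(y, w₁) ∈ p.edges ∧ s(y, w₂) ∈ p.edges := by
  have hspec := p.take_spec hy
  set p₁ := p.takeUntil y hy with hp₁
  set p₂ := p.dropUntil y hy with hp₂
  have hnd : p.support.Nodup := hp.support_nodup
  have hsup : p.support = p₁.support ++ p₂.support.tail := by
    rw [← hspec, Walk.support_append]
  rw [hsup, List.nodup_append] at hnd
  obtain ⟨w₁, h₁, q₁, hq₁⟩ := Walk.not_nil_iff.1 (not_nil_of_ne hyu (p := p₁.reverse))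
  obtain ⟨w₂, h₂, q₂, hq₂⟩ := Walk.not_nil_iff.1 (not_nil_of_ne hyv (p := p₂))
  refine ⟨w₁, w₂, ?_, ?_, ?_⟩
  · intro hww
    have hw₁ : w₁ ∈ p₁.support := by
      have : w₁ ∈ p₁.reverse.support := by rw [hq₁]; simp
      rwa [Walk.support_reverse, List.mem_reverse] at this
    have hw₂ : w₂ ∈ p₂.support.tail := by
      rw [hq₂]; simp
    exact hnd.2.2 _ hw₁ _ hw₂ hww
  · have : s(y, w₁) ∈ p₁.reverse.edges := by rw [hq₁]; simp
    rw [Walk.edges_reverse, List.mem_reverse] at this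
    exact p.edges_takeUntil_subset hy this
  · have : s(y, w₂) ∈ p₂.edges := by rw [hq₂]; simp
    exact p.edges_dropUntil_subset hy this

lemma head_neighbor_unique {u v y z : V} {h : X.Adj u y} {q : X.Walk y v}
    (hp : (Walk.cons h q).IsPath) (hadj : (Walk.cons h q).toSubgraph.Adj u z) : z = y := by
  have hadj' : s(u, y) = s(u, z) ∨ q.toSubgraph.Adj u z := by
    simpa only [Walk.toSubgraph, Subgraph.sup_adj, subgraphOfAdj_adj] using hadj
  rcases hadj' with hadj' | hadj'
  · rcases Sym2.eq_iff.1 hadj'.symm with ⟨-, hz⟩ | ⟨huy, -⟩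
    · exact hz
    · exact absurd huy h.ne
  · exfalso
    have : u ∈ q.support := (Walk.mem_verts_toSubgraph q).1 hadj'.fst_mem
    exact ((Walk.cons_isPath_iff h q).1 hp).2 this

lemma path_no_three_neighbors {u v z : V} (p : X.Walk u v) (hp : p.IsPath) {w₁ w₂ w₃ : V}
    (h₁ : p.toSubgraph.Adj z w₁) (h₂ : p.toSubgraph.Adj z w₂) (h₃ : p.toSubgraph.Adj z w₃)
    (d₁₂ : w₁ ≠ w₂) (d₁₃ : w₁ ≠ w₃) (d₂₃ : w₂ ≠ w₃) : False := by
  induction p with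
  | nil => simp [Walk.toSubgraph] at h₁
  | @cons a b c h q ih =>
    by_cases hza : z = a
    · subst hza
      have e1 := head_neighbor_unique hp h₁
      have e2 := head_neighbor_unique hp h₂
      exact d₁₂ (e1.trans e2.symm)
    · have key : ∀ w, (Walk.cons h q).toSubgraph.Adj z w →
          (z = b ∧ w = a) ∨ q.toSubgraph.Adj z w := by
        intro w hw
        have hw' : s(a, b) = s(z, w) ∨ q.toSubgraph.Adj z w := by
          simpa only [Walk.toSubgraph, Subgraph.sup_adj, subgraphOfAdj_adj] using hw
        rcases hw' with hw' | hw'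
        · rcases Sym2.eq_iff.1 hw'.symm with ⟨hza', -⟩ | ⟨hzb, hwa⟩
          · exact absurd hza' hza
          · exact Or.inl ⟨hzb, hwa⟩
        · exact Or.inr hw'
      have hq : q.IsPath := ((Walk.cons_isPath_iff h q).1 hp).1
      by_cases hzb : z = b
      · subst hzb
        cases q with
        | nil =>
          have k : ∀ w, (Walk.cons h Walk.nil).toSubgraph.Adj z w → w = a := by
            intro w hw
            rcases key w hw with ⟨-, hwa⟩ | hh
            · exact hwa
            · simp [Walk.toSubgraph] at hh
          exact d₁₂ ((k _ h₁).trans (k _ h₂).symm)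
        | cons h' q' =>
          rename_i b'
          have k : ∀ w, (Walk.cons h (Walk.cons h' q')).toSubgraph.Adj z w →
              w = a ∨ w = b' := by
            intro w hw
            rcases key w hw with ⟨-, hwa⟩ | hh
            · exact Or.inl hwa
            · exact Or.inr (head_neighbor_unique hq hh)
          rcases k _ h₁ with e1 | e1 <;> rcases k _ h₂ with e2 | e2 <;>
            rcases k _ h₃ with e3 | e3 <;>
            first
            | exact d₁₂ (e1.trans e2.symm)
            | exact d₁₃ (e1.trans e3.symm)
            | exact d₂₃ (e2.trans e3.symm)
      · refine ih hq ?_ ?_ ?_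
        · rcases key _ h₁ with ⟨hzb', -⟩ | hh
          · exact absurd hzb' hzb
          · exact hh
        · rcases key _ h₂ with ⟨hzb', -⟩ | hh
          · exact absurd hzb' hzb
          · exact hh
        · rcases key _ h₃ with ⟨hzb', -⟩ | hh
          · exact absurd hzb' hzb
          · exact hh

lemma mem_edge_of_mem_support {u v x : V} (p : X.Walk u v) (hnil : ¬ p.Nil)
    (hx : x ∈ p.support) : ∃ e ∈ p.edges, x ∈ e := by
  induction p with
  | nil => simp at hnil
  | @cons a b c h q ih =>
    rw [Walk.support_cons, List.mem_cons] at hx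
    rcases hx with rfl | hx
    · exact ⟨s(x, b), by simp, by simp⟩
    · by_cases hq : q.Nil
      · have : x = b := by
          cases q with
          | nil => simpa using hx
          | cons h' q' => simp at hq
        exact ⟨s(a, b), by simp, by simp [this]⟩
      · obtain ⟨e, he, hxe⟩ := ih hq hx
        exact ⟨e, by simp [he], hxe⟩


lemma spanningCoe_edgeSet {H : G.Subgraph} {e : Sym2 V} :
    e ∈ H.spanningCoe.edgeSet ↔ e ∈ H.edgeSet := by
  induction e with
  | _ a b => rfl

lemma sublist_sum_le' {l₁ l₂ : List ℕ} (h : l₁.Sublist l₂) : l₁.sum ≤ l₂.sum := by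
  induction h with
  | slnil => simp
  | cons a h ih => simpa using le_trans ih (by simp)
  | cons_cons a h ih => simpa using ih

lemma sum_map_le_of_nodup_subset' {α : Type*} [DecidableEq α] (w : α → ℕ) {l₁ l₂ : List α}
    (hnd : l₁.Nodup) (hsub : ∀ e ∈ l₁, e ∈ l₂) :
    (l₁.map w).sum ≤ (l₂.map w).sum := by
  obtain ⟨l, hperm, hsl⟩ := hnd.subperm hsub
  calc (l₁.map w).sum = (l.map w).sum := ((hperm.map w).sum_eq).symm
    _ ≤ (l₂.map w).sum := sublist_sum_le' (hsl.map w)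

lemma exists_cycle_of_two_paths (w : Sym2 V → ℕ) {s t : V} (p q : G.Walk s t)
    (hp : p.IsPath) (hq : q.IsPath) (hne : p ≠ q) :
    ∃ (v : V) (d : G.Walk v v), d.IsCycle ∧
      (d.edges.map w).sum ≤ (p.edges.map w).sum + (q.edges.map w).sum := by
  set H := (p.toSubgraph ⊔ q.toSubgraph).spanningCoe with hH
  have hpe : ∀ e ∈ p.edges, e ∈ H.edgeSet := by
    intro e he
    rw [hH, spanningCoe_edgeSet, Subgraph.edgeSet_sup]
    exact Or.inl ((Walk.mem_edges_toSubgraph p).2 he)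
  have hqe : ∀ e ∈ q.edges, e ∈ H.edgeSet := by
    intro e he
    rw [hH, spanningCoe_edgeSet, Subgraph.edgeSet_sup]
    exact Or.inr ((Walk.mem_edges_toSubgraph q).2 he)
  have hle : H ≤ G := Subgraph.spanningCoe_le _
  have hnacyc : ¬ H.IsAcyclic := by
    intro hac
    rw [isAcyclic_iff_path_unique] at hac
    have h1 := hac ⟨p.transfer H hpe, hp.transfer hpe⟩ ⟨q.transfer H hqe, hq.transfer hqe⟩
    apply hne
    have h2 : p.transfer H hpe = q.transfer H hqe := congrArg Subtype.val h1
    have hGe : ∀ (a b : V) (r : H.Walk a b), ∀ e ∈ r.edges, e ∈ G.edgeSet := by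
      intro a b r e he
      exact (SimpleGraph.edgeSet_subset_edgeSet.2 hle) (r.edges_subset_edgeSet he)
    have h3 := congrArg (fun r : H.Walk s t => r.transfer G (hGe s t r)) h2
    simp only [Walk.transfer_transfer] at h3
    rwa [p.transfer_self, q.transfer_self] at h3
  rw [SimpleGraph.IsAcyclic] at hnacyc
  push_neg at hnacyc
  obtain ⟨v, d', hd'⟩ := hnacyc
  have hinj : Function.Injective (Hom.ofLE hle) := fun a b h => h
  set d := d'.map (Hom.ofLE hle) with hd
  have hdc : d.IsCycle := (Walk.map_isCycle_iff_of_injective hinj).2 hd'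
  have hedges : d.edges = d'.edges := by
    rw [hd, Walk.edges_map]
    have he : ∀ e : Sym2 V, e.map (Hom.ofLE hle) = e := by
      intro e
      induction e with
      | _ a b => rfl
    have h0 : Sym2.map ⇑(Hom.ofLE hle) = id := funext he
    rw [h0, List.map_id]
  refine ⟨v, d, hdc, ?_⟩
  rw [hedges]
  have hnd : d'.edges.Nodup := hd'.isCircuit.isTrail.edges_nodup
  have hsub : ∀ e ∈ d'.edges, e ∈ p.edges ++ q.edges := by
    intro e he
    have := d'.edges_subset_edgeSet he
    rw [hH, spanningCoe_edgeSet, Subgraph.edgeSet_sup] at this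
    rw [List.mem_append]
    rcases this with h | h
    · exact Or.inl ((Walk.mem_edges_toSubgraph p).1 h)
    · exact Or.inr ((Walk.mem_edges_toSubgraph q).1 h)
  calc (d'.edges.map w).sum ≤ ((p.edges ++ q.edges).map w).sum :=
        sum_map_le_of_nodup_subset' w hnd hsub
    _ = (p.edges.map w).sum + (q.edges.map w).sum := by
        rw [List.map_append, List.sum_append]


lemma split_cycle (w : Sym2 V → ℕ) {s t : V} (c : G.Walk s s) (hc : c.IsCycle)
    (ht : t ∈ c.support) (hts : t ≠ s) :
    ∃ P₁ P₂ : G.Walk s t, P₁.IsPath ∧ P₂.IsPath ∧ P₁ ≠ P₂ ∧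
      (P₁.edges.map w).sum + (P₂.edges.map w).sum = (c.edges.map w).sum ∧
      P₁.toSubgraph ⊔ P₂.toSubgraph = c.toSubgraph ∧
      (∀ x, x ∈ P₁.support → x ∈ P₂.support → x = s ∨ x = t) := by
  set A := c.takeUntil t ht with hA
  set B := c.dropUntil t ht with hB
  have hspec : A.append B = c := c.take_spec ht
  have hedges : c.edges = A.edges ++ B.edges := by rw [← hspec, Walk.edges_append]
  have hsupp : c.support = A.support ++ B.support.tail := by
    rw [← hspec, Walk.support_append]
  have htail : c.support.tail = A.support.tail ++ B.support.tail := by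
    rw [hsupp]
    conv_lhs => rw [A.support_eq_cons]
    simp
  have hnd := hc.support_nodup
  rw [htail, List.nodup_append] at hnd
  have hce : c.edges.Nodup := hc.isCircuit.isTrail.edges_nodup
  rw [hedges, List.nodup_append] at hce
  have hsB : s ∈ B.support.tail := by
    have h1 : s ∈ B.support := B.end_mem_support
    rw [B.support_eq_cons, List.mem_cons] at h1
    rcases h1 with h1 | h1
    · exact absurd h1.symm hts
    · exact h1
  have hsA : s ∉ A.support.tail := fun h => hnd.2.2 _ h _ hsB rfl
  have htA : t ∈ A.support.tail := by
    have h1 : t ∈ A.support := A.end_mem_support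
    rw [A.support_eq_cons, List.mem_cons] at h1
    rcases h1 with h1 | h1
    · exact absurd h1 hts
    · exact h1
  have htB : t ∉ B.support.tail := fun h => hnd.2.2 _ htA _ h rfl
  have hApath : A.IsPath := by
    rw [Walk.isPath_def, A.support_eq_cons]
    exact List.nodup_cons.2 ⟨hsA, hnd.1⟩
  have hBpath : B.IsPath := by
    rw [Walk.isPath_def, B.support_eq_cons]
    exact List.nodup_cons.2 ⟨htB, hnd.2.1⟩
  refine ⟨A, B.reverse, hApath, hBpath.reverse, ?_, ?_, ?_, ?_⟩
  · -- A ≠ B.reverse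
    obtain ⟨x, hx, q, hAeq⟩ := Walk.not_nil_iff.1 (not_nil_of_ne hts.symm (p := A))
    intro hEq
    have he1 : s(s, x) ∈ A.edges := by rw [hAeq]; simp
    have he2 : s(s, x) ∈ B.edges := by
      have : s(s, x) ∈ B.reverse.edges := by rw [← hEq]; exact he1
      rwa [Walk.edges_reverse, List.mem_reverse] at this
    exact hce.2.2 _ he1 _ he2 rfl
  · rw [hedges, List.map_append, List.sum_append, Walk.edges_reverse, List.map_reverse,
      List.sum_reverse]
  · rw [Walk.toSubgraph_reverse, ← Walk.toSubgraph_append, hspec]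
  · intro x hx1 hx2
    rw [Walk.support_reverse, List.mem_reverse] at hx2
    by_contra hcon
    push_neg at hcon
    have hx1' : x ∈ A.support.tail := by
      rw [A.support_eq_cons, List.mem_cons] at hx1
      tauto
    have hx2' : x ∈ B.support.tail := by
      rw [B.support_eq_cons, List.mem_cons] at hx2
      tauto
    exact hnd.2.2 _ hx1' _ hx2' rfl

lemma cycle_arcs (w : Sym2 V → ℕ) {u s t : V} (c : G.Walk u u) (hc : c.IsCycle)
    (hs : s ∈ c.support) (ht : t ∈ c.support) (hst : s ≠ t) :
    ∃ P₁ P₂ : G.Walk s t, P₁.IsPath ∧ P₂.IsPath ∧ P₁ ≠ P₂ ∧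
      (P₁.edges.map w).sum + (P₂.edges.map w).sum = (c.edges.map w).sum ∧
      P₁.toSubgraph ⊔ P₂.toSubgraph = c.toSubgraph ∧
      (∀ x, x ∈ P₁.support → x ∈ P₂.support → x = s ∨ x = t) := by
  set c' := c.rotate s hs with hc'
  have hcyc' : c'.IsCycle := hc.rotate hs
  have hsub' : c'.toSubgraph = c.toSubgraph := c.toSubgraph_rotate hs
  have hsum' : (c'.edges.map w).sum = (c.edges.map w).sum :=
    ((c.rotate_edges s hs).perm.map w).sum_eq
  have ht' : t ∈ c'.support := by
    rw [← Walk.mem_verts_toSubgraph, hsub', Walk.mem_verts_toSubgraph]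
    exact ht
  obtain ⟨P₁, P₂, h1, h2, h3, h4, h5, h6⟩ := split_cycle w c' hcyc' ht' (Ne.symm hst)
  exact ⟨P₁, P₂, h1, h2, h3, by rw [h4, hsum'], by rw [h5, hsub'], h6⟩


lemma subgraph_is_path :
    ∀ {y x : V} (q : G.Walk y x), q.IsPath → ∀ S : G.Subgraph, S ≤ q.toSubgraph →
      (∀ a ∈ S.verts, ∀ b ∈ S.verts, S.spanningCoe.Reachable a b) → S.verts.Nonempty →
      ∃ (c d : V) (r : G.Walk c d), r.IsPath ∧ r.toSubgraph = S := by
  intro y x q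
  induction q with
  | @nil u =>
    intro hq S hle hconn hne
    refine ⟨u, u, Walk.nil, by simp, ?_⟩
    have h1 : (Walk.nil : G.Walk u u).toSubgraph = G.singletonSubgraph u := rfl
    rw [h1]
    refine le_antisymm ?_ hle
    rw [singletonSubgraph_le_iff]
    obtain ⟨a, ha⟩ := hne
    have h2 : a ∈ (Walk.nil : G.Walk u u).toSubgraph.verts := hle.1 ha
    rw [Walk.mem_verts_toSubgraph] at h2
    simp only [Walk.support_nil, List.mem_singleton] at h2
    rwa [← h2]
  | @cons a b x h q' ih =>
    intro hq S hle hconn hne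
    have hq' : q'.IsPath := ((Walk.cons_isPath_iff h q').1 hq).1
    have hkey : ∀ u v, S.Adj u v → s(u, v) = s(a, b) ∨ q'.toSubgraph.Adj u v := by
      intro u v huv
      have := hle.2 huv
      simpa only [Walk.toSubgraph, Subgraph.sup_adj, subgraphOfAdj_adj, eq_comm] using this
    by_cases hy : a ∈ S.verts
    · by_cases hone : ∀ v ∈ S.verts, v = a
      · refine ⟨a, a, Walk.nil, by simp, ?_⟩
        have h1 : (Walk.nil : G.Walk a a).toSubgraph = G.singletonSubgraph a := rfl
        rw [h1]
        refine le_antisymm ?_ ?_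
        · rw [singletonSubgraph_le_iff]; exact hy
        · refine ⟨?_, ?_⟩
          · intro v hv; simp [hone v hv]
          · intro u v huv
            have hu := hone _ (S.edge_vert huv)
            have hv := hone _ (S.edge_vert huv.symm)
            subst hu; rw [hv] at huv
            exact absurd (S.adj_sub huv) (G.irrefl)
      · push_neg at hone
        obtain ⟨v₀, hv₀, hv₀a⟩ := hone
        obtain ⟨W⟩ := hconn a hy v₀ hv₀
        obtain ⟨z₀, hz₀, W', hW⟩ := Walk.not_nil_iff.1 (not_nil_of_ne (p := W) (Ne.symm hv₀a))
        have hSab : S.Adj a b := by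
          have hz₀' : S.Adj a z₀ := hz₀
          have : z₀ = b := head_neighbor_unique hq (hle.2 hz₀')
          rwa [this] at hz₀'
        have huniq : ∀ w, S.Adj a w → w = b := fun w hw => head_neighbor_unique hq (hle.2 hw)
        set S' : G.Subgraph :=
          { verts := S.verts \ {a}
            Adj := fun u v => S.Adj u v ∧ u ≠ a ∧ v ≠ a
            adj_sub := fun hct => S.adj_sub hct.1
            edge_vert := fun hct => ⟨S.edge_vert hct.1, hct.2.1⟩
            symm := ⟨fun u v hct => ⟨hct.1.symm, hct.2.2, hct.2.1⟩⟩ } with hS'def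
        have hS'le : S' ≤ q'.toSubgraph := by
          refine ⟨?_, ?_⟩
          · rintro v ⟨hv, hva⟩
            have := hle.1 hv
            rw [Walk.mem_verts_toSubgraph] at this
            rw [Walk.support_cons, List.mem_cons] at this
            rcases this with h1 | h1
            · exact absurd h1 hva
            · rwa [Walk.mem_verts_toSubgraph]
          · rintro u v ⟨huv, hua, hva⟩
            rcases hkey u v huv with h1 | h1
            · exfalso
              rcases Sym2.eq_iff.1 h1 with ⟨h2, -⟩ | ⟨-, h2⟩
              · exact hua h2
              · exact hva h2
            · exact h1
        have hconn' : ∀ u ∈ S'.verts, ∀ v ∈ S'.verts, S'.spanningCoe.Reachable u v := by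
          rintro u ⟨hu, hua⟩ v ⟨hv, hva⟩
          obtain ⟨W0⟩ := hconn u hu v hv
          set p := W0.toPath.val with hpdef
          have hp : p.IsPath := W0.toPath.property
          have haP : a ∉ p.support := by
            intro hmem
            simp only [Set.mem_singleton_iff] at hua hva
            obtain ⟨w₁, w₂, hww, he₁, he₂⟩ := interior_neighbors p hp hmem
              (fun hc => hua hc.symm) (fun hc => hva hc.symm)
            have h1 : S.Adj a w₁ := (p.edges_subset_edgeSet he₁ : _)
            have h2 : S.Adj a w₂ := (p.edges_subset_edgeSet he₂ : _)
            exact hww ((huniq _ h1).trans (huniq _ h2).symm)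
          refine ⟨p.transfer S'.spanningCoe ?_⟩
          intro e he
          have hmem := fun hx => haP hx
          induction e with
          | _ c d =>
            have hScd : S.Adj c d := (p.edges_subset_edgeSet he : _)
            have hc : c ∈ p.support := p.fst_mem_support_of_mem_edges he
            have hd : d ∈ p.support := p.snd_mem_support_of_mem_edges he
            have hca : c ≠ a := fun hc' => haP (hc' ▸ hc)
            have hda : d ≠ a := fun hd' => haP (hd' ▸ hd)
            exact (SimpleGraph.mem_edgeSet _).2 (⟨hScd, hca, hda⟩ : S'.Adj c d)
        have hne' : S'.verts.Nonempty := ⟨b, S.edge_vert hSab.symm, h.ne'⟩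
        obtain ⟨c, d, r, hr, hrS⟩ := ih hq' S' hS'le hconn' hne'
        have hbr : b ∈ r.support := by
          rw [← Walk.mem_verts_toSubgraph, hrS]
          exact ⟨S.edge_vert hSab.symm, h.ne'⟩
        have hbend : b = c ∨ b = d := by
          by_contra hcon
          push_neg at hcon
          obtain ⟨w₁, w₂, hww, he₁, he₂⟩ := interior_neighbors r hr hbr hcon.1 hcon.2
          have hS'₁ : S'.Adj b w₁ := by
            rw [← Subgraph.mem_edgeSet, ← hrS]
            exact (Walk.mem_edges_toSubgraph r).2 he₁
          have hS'₂ : S'.Adj b w₂ := by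
            rw [← Subgraph.mem_edgeSet, ← hrS]
            exact (Walk.mem_edges_toSubgraph r).2 he₂
          exact path_no_three_neighbors _ hq (hle.2 hS'₁.1) (hle.2 hS'₂.1) (hle.2 hSab.symm)
            hww hS'₁.2.2 hS'₂.2.2
        obtain ⟨d₀, r₀, hr₀, hr₀S⟩ :
            ∃ (d₀ : V) (r₀ : G.Walk b d₀), r₀.IsPath ∧ r₀.toSubgraph = S' := by
          rcases hbend with rfl | rfl
          · exact ⟨d, r, hr, hrS⟩
          · exact ⟨c, r.reverse, hr.reverse, by rw [Walk.toSubgraph_reverse, hrS]⟩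
        have har₀ : a ∉ r₀.support := by
          intro hmem
          rw [← Walk.mem_verts_toSubgraph, hr₀S] at hmem
          exact hmem.2 rfl
        refine ⟨a, d₀, Walk.cons h r₀, hr₀.cons har₀, ?_⟩
        have h1 : (Walk.cons h r₀).toSubgraph = G.subgraphOfAdj h ⊔ S' := by
          rw [← hr₀S]; rfl
        rw [h1]
        refine le_antisymm (sup_le ?_ ?_) ?_
        · refine ⟨?_, ?_⟩
          · intro v hv
            simp only [subgraphOfAdj_verts, Set.mem_insert_iff, Set.mem_singleton_iff] at hv
            rcases hv with rfl | rfl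
            · exact hy
            · exact S.edge_vert hSab.symm
          · intro u v huv
            rw [subgraphOfAdj_adj] at huv
            rcases Sym2.eq_iff.1 huv with ⟨rfl, rfl⟩ | ⟨rfl, rfl⟩
            · exact hSab
            · exact hSab.symm
        · exact ⟨fun v hv => hv.1, fun u v huv => huv.1⟩
        · refine ⟨?_, ?_⟩
          · intro v hv
            by_cases hva : v = a
            · subst hva; left; simp
            · right; exact ⟨hv, hva⟩
          · intro u v huv
            by_cases hua : u = a
            · subst hua
              left
              rw [subgraphOfAdj_adj]
              rw [huniq v huv]
            · by_cases hva : v = a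
              · subst hva
                left
                rw [subgraphOfAdj_adj, huniq u huv.symm]
                exact Sym2.eq_swap
              · right; exact ⟨huv, hua, hva⟩
    · refine ih hq' S ⟨?_, ?_⟩ hconn hne
      · intro v hv
        have := hle.1 hv
        rw [Walk.mem_verts_toSubgraph, Walk.support_cons, List.mem_cons] at this
        rcases this with h1 | h1
        · exact absurd (h1 ▸ hv) hy
        · rwa [Walk.mem_verts_toSubgraph]
      · intro u v huv
        rcases hkey u v huv with h1 | h1
        · exfalso
          rcases Sym2.eq_iff.1 h1 with ⟨h2, -⟩ | ⟨-, h2⟩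
          · exact hy (h2 ▸ S.edge_vert huv)
          · exact hy (h2 ▸ S.edge_vert huv.symm)
        · exact h1


lemma cycle_decomp_at_edge {a b : V} (d : G.Walk a a) (hd : d.IsCycle)
    (he : s(a, b) ∈ d.edges) :
    ∃ (h : G.Adj a b) (q : G.Walk b a), q.IsPath ∧
      G.subgraphOfAdj h ⊔ q.toSubgraph = d.toSubgraph := by
  have hnn : ¬ d.Nil := by
    intro hn
    cases d with
    | nil => exact hd.ne_nil rfl
    | cons h p => simp at hn
  obtain ⟨v₁, h₁, q₁, hdq⟩ := Walk.not_nil_iff.1 hnn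
  have hq₁path : q₁.IsPath := by
    rw [Walk.isPath_def]
    have h2 := hd.support_nodup
    rw [hdq, Walk.support_cons, List.tail_cons] at h2
    exact h2
  rw [hdq, Walk.edges_cons, List.mem_cons] at he
  rcases he with he | he
  · have hb : b = v₁ := by
      rcases Sym2.eq_iff.1 he with ⟨-, h2⟩ | ⟨h2, h3⟩
      · exact h2
      · exact absurd (h2 ▸ h₁) (G.irrefl)
    subst hb
    exact ⟨h₁, q₁, hq₁path, by rw [hdq]; rfl⟩
  · obtain ⟨b₂, h₂, q₂, hq₂eq, he₂⟩ := edge_at_head q₁.reverse hq₁path.reverse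
      (by rw [Walk.edges_reverse, List.mem_reverse]; exact he) (by simp)
    have hb : b₂ = b := by
      rcases Sym2.eq_iff.1 he₂ with ⟨-, h2⟩ | ⟨h2, h3⟩
      · exact h2.symm
      · exact absurd (h2 ▸ h₂) (G.irrefl)
    subst hb
    have hrev : d.reverse = Walk.cons h₂ (q₂.append (Walk.cons h₁.symm Walk.nil)) := by
      rw [hdq, Walk.reverse_cons, hq₂eq, Walk.cons_append]
    have hdrev : d.reverse.IsCycle := isCycle_reverse hd
    set Q := q₂.append (Walk.cons h₁.symm Walk.nil) with hQ
    have hQpath : Q.IsPath := by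
      rw [Walk.isPath_def]
      have h2 := hdrev.support_nodup
      rw [hrev, Walk.support_cons, List.tail_cons] at h2
      exact h2
    refine ⟨h₂, Q, hQpath, ?_⟩
    calc G.subgraphOfAdj h₂ ⊔ Q.toSubgraph = (Walk.cons h₂ Q).toSubgraph := rfl
      _ = d.reverse.toSubgraph := by rw [hrev]
      _ = d.toSubgraph := Walk.toSubgraph_reverse d


lemma caseB (w : Sym2 V → ℕ) (hw : ∀ e ∈ G.edgeSet, 0 < w e) (g : ℕ)
    {u₁ u₂ : V} (c₁ : G.Walk u₁ u₁) (c₂ : G.Walk u₂ u₂)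
    (h₁ : c₁.IsCycle) (h₂ : c₂.IsCycle)
    (hw₁ : (c₁.edges.map w).sum = g) (hw₂ : (c₂.edges.map w).sum = g)
    (hne : c₁.toSubgraph ≠ c₂.toSubgraph)
    (hshare : ∃ x, x ∈ c₁.support ∧ x ∈ c₂.support)
    (hconn : ∀ a ∈ (c₁.toSubgraph ⊓ c₂.toSubgraph).verts,
      ∀ b ∈ (c₁.toSubgraph ⊓ c₂.toSubgraph).verts,
      (c₁.toSubgraph ⊓ c₂.toSubgraph).spanningCoe.Reachable a b) :
    ∃ (x y : V) (r : G.Walk x y), r.IsPath ∧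
      r.toSubgraph = c₁.toSubgraph ⊓ c₂.toSubgraph := by
  set S := c₁.toSubgraph ⊓ c₂.toSubgraph with hS
  have hS1 : S ≤ c₁.toSubgraph := inf_le_left
  have hnn1 : ¬ c₁.Nil := by
    intro hn
    cases c₁ with
    | nil => exact h₁.ne_nil rfl
    | cons h p => simp at hn
  have hnn2 : ¬ c₂.Nil := by
    intro hn
    cases c₂ with
    | nil => exact h₂.ne_nil rfl
    | cons h p => simp at hn
  have hSne : S ≠ c₁.toSubgraph := by
    intro hEq
    have hle12 : c₁.toSubgraph ≤ c₂.toSubgraph := hEq ▸ inf_le_right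
    apply hne
    have hedgesub : ∀ e ∈ c₁.edges, e ∈ c₂.edges := by
      intro e he
      exact (Walk.mem_edges_toSubgraph c₂).1
        (Subgraph.edgeSet_mono hle12 ((Walk.mem_edges_toSubgraph c₁).2 he))
    have hedgeeq : ∀ e ∈ c₂.edges, e ∈ c₁.edges := by
      by_contra hcon
      push_neg at hcon
      obtain ⟨e₀, he₀, he₀'⟩ := hcon
      have hnd1 : c₁.edges.Nodup := h₁.isCircuit.isTrail.edges_nodup
      have hnd : (c₁.edges ++ [e₀]).Nodup := by
        rw [List.nodup_append]
        exact ⟨hnd1, List.nodup_singleton e₀, by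
          intro x hx
          simp only [List.mem_singleton]
          intro y hy hxy; subst hy; exact he₀' (by rw [← hxy]; exact hx)⟩
      have hsub : ∀ e ∈ c₁.edges ++ [e₀], e ∈ c₂.edges := by
        intro e he
        rw [List.mem_append, List.mem_singleton] at he
        rcases he with he | rfl
        · exact hedgesub e he
        · exact he₀
      have hle := sum_map_le_of_nodup_subset' w hnd hsub
      rw [List.map_append, List.sum_append, hw₁, hw₂] at hle
      have hwe₀ : 0 < w e₀ := hw e₀ (c₂.edges_subset_edgeSet he₀)
      simp only [List.map_singleton, List.sum_singleton] at hle
      omega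
    have hvs : ∀ x, x ∈ c₁.support ↔ x ∈ c₂.support := by
      intro x
      constructor
      · intro hx
        obtain ⟨e, he, hxe⟩ := mem_edge_of_mem_support c₁ hnn1 hx
        obtain ⟨c, rfl⟩ := Sym2.mem_iff_exists.1 hxe
        exact c₂.fst_mem_support_of_mem_edges (hedgesub _ he)
      · intro hx
        obtain ⟨e, he, hxe⟩ := mem_edge_of_mem_support c₂ hnn2 hx
        obtain ⟨c, rfl⟩ := Sym2.mem_iff_exists.1 hxe
        exact c₁.fst_mem_support_of_mem_edges (hedgeeq _ he)
    refine Subgraph.ext ?_ ?_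
    · rw [Walk.verts_toSubgraph, Walk.verts_toSubgraph]
      ext x
      exact hvs x
    · funext u v
      apply propext
      constructor
      · intro hadj
        rw [← Subgraph.mem_edgeSet] at hadj ⊢
        rw [Walk.mem_edges_toSubgraph] at hadj ⊢
        exact hedgesub _ hadj
      · intro hadj
        rw [← Subgraph.mem_edgeSet] at hadj ⊢
        rw [Walk.mem_edges_toSubgraph] at hadj ⊢
        exact hedgeeq _ hadj
  obtain ⟨e₀, he₀, he₀S⟩ : ∃ e₀ ∈ c₁.edges, e₀ ∉ S.edgeSet := by
    by_contra hcon
    push_neg at hcon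
    apply hSne
    apply le_antisymm hS1
    refine ⟨?_, ?_⟩
    · intro x hx
      rw [Walk.mem_verts_toSubgraph] at hx
      obtain ⟨e, he, hxe⟩ := mem_edge_of_mem_support c₁ hnn1 hx
      exact Subgraph.mem_verts_of_mem_edge (hcon e he) hxe
    · intro u v huv
      rw [← Subgraph.mem_edgeSet] at huv
      rw [Walk.mem_edges_toSubgraph] at huv
      exact (Subgraph.mem_edgeSet).1 (hcon _ huv)
  revert he₀ he₀S
  induction e₀ with
  | _ a b =>
    intro he₀ he₀S
    have ha : a ∈ c₁.support := c₁.fst_mem_support_of_mem_edges he₀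
    set d := c₁.rotate a ha with hd
    have hdc : d.IsCycle := h₁.rotate ha
    have hdsub : d.toSubgraph = c₁.toSubgraph := c₁.toSubgraph_rotate ha
    have he₀d : s(a, b) ∈ d.edges := (c₁.rotate_edges a ha).perm.mem_iff.2 he₀
    obtain ⟨hab, q, hqpath, hdecomp⟩ := cycle_decomp_at_edge d hdc he₀d
    have hSq : S ≤ q.toSubgraph := by
      refine ⟨?_, ?_⟩
      · intro x hx
        have h3 : x ∈ c₁.toSubgraph.verts := hS1.1 hx
        rw [← hdsub, ← hdecomp, Subgraph.verts_sup] at h3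
        rcases h3 with h3 | h3
        · simp only [subgraphOfAdj_verts, Set.mem_insert_iff, Set.mem_singleton_iff] at h3
          rcases h3 with rfl | rfl
          · rw [Walk.mem_verts_toSubgraph]; exact q.end_mem_support
          · rw [Walk.mem_verts_toSubgraph]; exact q.start_mem_support
        · exact h3
      · intro u v huv
        have h3 : c₁.toSubgraph.Adj u v := hS1.2 huv
        rw [← hdsub, ← hdecomp, Subgraph.sup_adj] at h3
        rcases h3 with h3 | h3
        · exfalso
          rw [subgraphOfAdj_adj] at h3
          apply he₀S
          rw [h3]
          exact (Subgraph.mem_edgeSet).2 huv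
        · exact h3
    apply subgraph_is_path q hqpath S hSq hconn
    obtain ⟨x₀, hx₁, hx₂⟩ := hshare
    exact ⟨x₀, (Walk.mem_verts_toSubgraph c₁).2 hx₁, (Walk.mem_verts_toSubgraph c₂).2 hx₂⟩


lemma reachable_of_walk_le {S : G.Subgraph} {p q : V} (R : G.Walk p q)
    (h : R.toSubgraph ≤ S) : S.spanningCoe.Reachable p q :=
  ⟨R.transfer S.spanningCoe (fun e he =>
    spanningCoe_edgeSet.2 (Subgraph.edgeSet_mono h ((Walk.mem_edges_toSubgraph R).2 he)))⟩


lemma caseA (w : Sym2 V → ℕ) (hw : ∀ e ∈ G.edgeSet, 0 < w e) (g : ℕ)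
    (hgirth_le : ∀ (v : V) (d : G.Walk v v), d.IsCycle → g ≤ (d.edges.map w).sum)
    {u₁ u₂ : V} (c₁ : G.Walk u₁ u₁) (c₂ : G.Walk u₂ u₂)
    (h₁ : c₁.IsCycle) (h₂ : c₂.IsCycle)
    (hw₁ : (c₁.edges.map w).sum = g) (hw₂ : (c₂.edges.map w).sum = g)
    {s t : V} (hs : s ∈ (c₁.toSubgraph ⊓ c₂.toSubgraph).verts)
    (ht : t ∈ (c₁.toSubgraph ⊓ c₂.toSubgraph).verts)
    (hnr : ¬ (c₁.toSubgraph ⊓ c₂.toSubgraph).spanningCoe.Reachable s t) :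
    s ≠ t ∧
      (c₁.toSubgraph ⊓ c₂.toSubgraph).verts = {s, t} ∧
      ∃ P₁ P₂ Q₁ Q₂ : G.Walk s t,
        P₁.IsPath ∧ P₂.IsPath ∧ Q₁.IsPath ∧ Q₂.IsPath ∧
        2 * (P₁.edges.map w).sum = g ∧ 2 * (P₂.edges.map w).sum = g ∧
        2 * (Q₁.edges.map w).sum = g ∧ 2 * (Q₂.edges.map w).sum = g ∧
        c₁.toSubgraph = P₁.toSubgraph ⊔ P₂.toSubgraph ∧
        c₂.toSubgraph = Q₁.toSubgraph ⊔ Q₂.toSubgraph ∧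
        List.Pairwise (fun (A B : G.Walk s t) => A ≠ B ∧
            ∀ x, x ∈ A.support → x ∈ B.support → x = s ∨ x = t)
          [P₁, P₂, Q₁, Q₂] := by
  set S := c₁.toSubgraph ⊓ c₂.toSubgraph with hSdef
  have hst : s ≠ t := fun h => hnr (h ▸ Reachable.refl s)
  have hs1 : s ∈ c₁.support := (Walk.mem_verts_toSubgraph c₁).1 hs.1
  have hs2 : s ∈ c₂.support := (Walk.mem_verts_toSubgraph c₂).1 hs.2
  have ht1 : t ∈ c₁.support := (Walk.mem_verts_toSubgraph c₁).1 ht.1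
  have ht2 : t ∈ c₂.support := (Walk.mem_verts_toSubgraph c₂).1 ht.2
  -- the key quantitative inequality
  have hL6 : ∀ (p q : V), ¬ S.spanningCoe.Reachable p q → ∀ (R T : G.Walk p q),
      R.IsPath → T.IsPath → R.toSubgraph ≤ c₁.toSubgraph → T.toSubgraph ≤ c₂.toSubgraph →
      g ≤ (R.edges.map w).sum + (T.edges.map w).sum := by
    intro p q hnr' R T hR hT hRle hTle
    have hne : R ≠ T := by
      intro hEq
      exact hnr' (reachable_of_walk_le R (le_inf hRle (hEq ▸ hTle)))
    obtain ⟨v, dcyc, hdc, hdsum⟩ := exists_cycle_of_two_paths w R T hR hT hne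
    exact le_trans (hgirth_le v dcyc hdc) hdsum
  obtain ⟨P₁, P₂, hP₁p, hP₂p, hPne, hPsum, hPsup, hPint⟩ := cycle_arcs w c₁ h₁ hs1 ht1 hst
  obtain ⟨Q₁, Q₂, hQ₁p, hQ₂p, hQne, hQsum, hQsup, hQint⟩ := cycle_arcs w c₂ h₂ hs2 ht2 hst
  rw [hw₁] at hPsum
  rw [hw₂] at hQsum
  have hP₁le : P₁.toSubgraph ≤ c₁.toSubgraph := by rw [← hPsup]; exact le_sup_left
  have hP₂le : P₂.toSubgraph ≤ c₁.toSubgraph := by rw [← hPsup]; exact le_sup_right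
  have hQ₁le : Q₁.toSubgraph ≤ c₂.toSubgraph := by rw [← hQsup]; exact le_sup_left
  have hQ₂le : Q₂.toSubgraph ≤ c₂.toSubgraph := by rw [← hQsup]; exact le_sup_right
  have h11 := hL6 s t hnr P₁ Q₁ hP₁p hQ₁p hP₁le hQ₁le
  have h12 := hL6 s t hnr P₁ Q₂ hP₁p hQ₂p hP₁le hQ₂le
  have h21 := hL6 s t hnr P₂ Q₁ hP₂p hQ₁p hP₂le hQ₁le
  have h22 := hL6 s t hnr P₂ Q₂ hP₂p hQ₂p hP₂le hQ₂le
  have ha₁ : 2 * (P₁.edges.map w).sum = g := by omega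
  have ha₂ : 2 * (P₂.edges.map w).sum = g := by omega
  have hb₁ : 2 * (Q₁.edges.map w).sum = g := by omega
  have hb₂ : 2 * (Q₂.edges.map w).sum = g := by omega
  -- membership transfer helpers
  have hmemP : ∀ {A : G.Walk s t}, A.toSubgraph ≤ c₁.toSubgraph →
      ∀ {x}, x ∈ A.support → x ∈ c₁.support := by
    intro A hle x hx
    exact (Walk.mem_verts_toSubgraph c₁).1 (hle.1 ((Walk.mem_verts_toSubgraph A).2 hx))
  have hmemQ : ∀ {A : G.Walk s t}, A.toSubgraph ≤ c₂.toSubgraph →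
      ∀ {x}, x ∈ A.support → x ∈ c₂.support := by
    intro A hle x hx
    exact (Walk.mem_verts_toSubgraph c₂).1 (hle.1 ((Walk.mem_verts_toSubgraph A).2 hx))
  -- no third common vertex
  have hverts : S.verts = {s, t} := by
    ext x
    simp only [Set.mem_insert_iff, Set.mem_singleton_iff]
    constructor
    · intro hx
      by_contra hxc
      push_neg at hxc
      obtain ⟨hxs, hxt⟩ := hxc
      have hx1 : x ∈ c₁.support := (Walk.mem_verts_toSubgraph c₁).1 hx.1
      have hx2 : x ∈ c₂.support := (Walk.mem_verts_toSubgraph c₂).1 hx.2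
      have hur : ¬ S.spanningCoe.Reachable s x ∨ ¬ S.spanningCoe.Reachable t x := by
        by_contra hc
        push_neg at hc
        exact hnr (hc.1.trans hc.2.symm)
      have key : ∀ (A : G.Walk s t), A.IsPath → A.toSubgraph ≤ c₁.toSubgraph →
          x ∈ A.support → 2 * (A.edges.map w).sum = g → False := by
        intro A hApath hAle hxA hAw
        have hspecA := A.take_spec hxA
        set R₁ := A.takeUntil x hxA with hR₁def
        set R₂ := A.dropUntil x hxA with hR₂def
        have hsplit : (R₁.edges.map w).sum + (R₂.edges.map w).sum = (A.edges.map w).sum := by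
          rw [← hspecA, Walk.edges_append, List.map_append, List.sum_append]
        have hR₁pos : 1 ≤ (R₁.edges.map w).sum := one_le_weight w hw R₁ (Ne.symm hxs)
        have hR₂pos : 1 ≤ (R₂.edges.map w).sum := one_le_weight w hw R₂ hxt
        have hR₁path : R₁.IsPath := hApath.takeUntil hxA
        have hR₂path : R₂.IsPath := hApath.dropUntil hxA
        have hAsub : A.toSubgraph = R₁.toSubgraph ⊔ R₂.toSubgraph := by
          rw [← hspecA, Walk.toSubgraph_append]
        have hR₁le : R₁.toSubgraph ≤ c₁.toSubgraph :=
          le_trans (by rw [hAsub]; exact le_sup_left) hAle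
        have hR₂le : R₂.toSubgraph ≤ c₁.toSubgraph :=
          le_trans (by rw [hAsub]; exact le_sup_right) hAle
        rcases hur with hur | hur
        · obtain ⟨T₁, T₂, hT₁p, hT₂p, hTne, hTsum, hTsup, hTint⟩ :=
            cycle_arcs w c₂ h₂ hs2 hx2 (Ne.symm hxs)
          rw [hw₂] at hTsum
          have hT₁le : T₁.toSubgraph ≤ c₂.toSubgraph := by rw [← hTsup]; exact le_sup_left
          have hT₂le : T₂.toSubgraph ≤ c₂.toSubgraph := by rw [← hTsup]; exact le_sup_right
          have k1 := hL6 s x hur R₁ T₁ hR₁path hT₁p hR₁le hT₁le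
          have k2 := hL6 s x hur R₁ T₂ hR₁path hT₂p hR₁le hT₂le
          omega
        · obtain ⟨T₁, T₂, hT₁p, hT₂p, hTne, hTsum, hTsup, hTint⟩ :=
            cycle_arcs w c₂ h₂ ht2 hx2 (Ne.symm hxt)
          rw [hw₂] at hTsum
          have hT₁le : T₁.toSubgraph ≤ c₂.toSubgraph := by rw [← hTsup]; exact le_sup_left
          have hT₂le : T₂.toSubgraph ≤ c₂.toSubgraph := by rw [← hTsup]; exact le_sup_right
          have hRrev : (R₂.reverse.edges.map w).sum = (R₂.edges.map w).sum := by
            rw [Walk.edges_reverse, List.map_reverse, List.sum_reverse]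
          have hR₂rle : R₂.reverse.toSubgraph ≤ c₁.toSubgraph := by
            rw [Walk.toSubgraph_reverse]; exact hR₂le
          have k1 := hL6 t x hur R₂.reverse T₁ hR₂path.reverse hT₁p hR₂rle hT₁le
          have k2 := hL6 t x hur R₂.reverse T₂ hR₂path.reverse hT₂p hR₂rle hT₂le
          omega
      have hxP : x ∈ P₁.support ∨ x ∈ P₂.support := by
        have h3 : x ∈ c₁.toSubgraph.verts := hx.1
        rw [← hPsup, Subgraph.verts_sup] at h3
        rcases h3 with h3 | h3
        · exact Or.inl ((Walk.mem_verts_toSubgraph P₁).1 h3)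
        · exact Or.inr ((Walk.mem_verts_toSubgraph P₂).1 h3)
      rcases hxP with h3 | h3
      · exact key P₁ hP₁p hP₁le h3 ha₁
      · exact key P₂ hP₂p hP₂le h3 ha₂
    · intro hx
      rcases hx with rfl | rfl
      · exact hs
      · exact ht
  have hcross : ∀ (R T : G.Walk s t), R.toSubgraph ≤ c₁.toSubgraph →
      T.toSubgraph ≤ c₂.toSubgraph → R ≠ T := by
    intro R T hle1 hle2 hEq
    exact hnr (reachable_of_walk_le R (le_inf hle1 (hEq ▸ hle2)))
  have hcrossint : ∀ (R T : G.Walk s t), R.toSubgraph ≤ c₁.toSubgraph →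
      T.toSubgraph ≤ c₂.toSubgraph → ∀ x, x ∈ R.support → x ∈ T.support →
      x = s ∨ x = t := by
    intro R T hle1 hle2 x hx1 hx2
    have hxv : x ∈ S.verts :=
      ⟨(Walk.mem_verts_toSubgraph c₁).2 (hmemP hle1 hx1),
       (Walk.mem_verts_toSubgraph c₂).2 (hmemQ hle2 hx2)⟩
    rw [hverts] at hxv
    simpa using hxv
  refine ⟨hst, hverts, P₁, P₂, Q₁, Q₂, hP₁p, hP₂p, hQ₁p, hQ₂p, ha₁, ha₂, hb₁, hb₂,
    hPsup.symm, hQsup.symm, ?_⟩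
  refine List.Pairwise.cons ?_ (List.Pairwise.cons ?_ (List.Pairwise.cons ?_ (List.Pairwise.cons (by simp) List.Pairwise.nil)))
  · intro B hB
    simp only [List.mem_cons, List.not_mem_nil, or_false] at hB
    rcases hB with rfl | rfl | rfl
    · exact ⟨hPne, hPint⟩
    · exact ⟨hcross P₁ B hP₁le hQ₁le, hcrossint P₁ B hP₁le hQ₁le⟩
    · exact ⟨hcross P₁ B hP₁le hQ₂le, hcrossint P₁ B hP₁le hQ₂le⟩
  · intro B hB
    simp only [List.mem_cons, List.not_mem_nil, or_false] at hB
    rcases hB with rfl | rfl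
    · exact ⟨hcross P₂ B hP₂le hQ₁le, hcrossint P₂ B hP₂le hQ₁le⟩
    · exact ⟨hcross P₂ B hP₂le hQ₂le, hcrossint P₂ B hP₂le hQ₂le⟩
  · intro B hB
    simp only [List.mem_cons, List.not_mem_nil, or_false] at hB
    rcases hB with rfl
    exact ⟨hQne, hQint⟩

end Stmt12Aux

theorem stmt_12 {V : Type*} [Fintype V] [DecidableEq V]
    (G : SimpleGraph V) (w : Sym2 V → ℕ)
    (hw : ∀ e ∈ G.edgeSet, 0 < w e) (g : ℕ)
    (hgirth_le : ∀ (v : V) (d : G.Walk v v), d.IsCycle → g ≤ (d.edges.map w).sum)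
    (hgirth_ex : ∃ (v : V) (d : G.Walk v v), d.IsCycle ∧ (d.edges.map w).sum = g)
    (u₁ u₂ : V) (c₁ : G.Walk u₁ u₁) (c₂ : G.Walk u₂ u₂)
    (h₁ : c₁.IsCycle) (h₂ : c₂.IsCycle)
    (hw₁ : (c₁.edges.map w).sum = g) (hw₂ : (c₂.edges.map w).sum = g)
    (hne : c₁.toSubgraph ≠ c₂.toSubgraph)
    (hshare : ∃ x, x ∈ c₁.support ∧ x ∈ c₂.support) :
    (∃ (x y : V) (r : G.Walk x y), r.IsPath ∧
        r.toSubgraph = c₁.toSubgraph ⊓ c₂.toSubgraph) ∨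
    (∃ s t : V, s ≠ t ∧
      (c₁.toSubgraph ⊓ c₂.toSubgraph).verts = {s, t} ∧
      ∃ P₁ P₂ Q₁ Q₂ : G.Walk s t,
        P₁.IsPath ∧ P₂.IsPath ∧ Q₁.IsPath ∧ Q₂.IsPath ∧
        2 * (P₁.edges.map w).sum = g ∧ 2 * (P₂.edges.map w).sum = g ∧
        2 * (Q₁.edges.map w).sum = g ∧ 2 * (Q₂.edges.map w).sum = g ∧
        c₁.toSubgraph = P₁.toSubgraph ⊔ P₂.toSubgraph ∧
        c₂.toSubgraph = Q₁.toSubgraph ⊔ Q₂.toSubgraph ∧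
        List.Pairwise (fun (A B : G.Walk s t) => A ≠ B ∧
            ∀ x, x ∈ A.support → x ∈ B.support → x = s ∨ x = t)
          [P₁, P₂, Q₁, Q₂]) := by
  by_cases hconn : ∀ a ∈ (c₁.toSubgraph ⊓ c₂.toSubgraph).verts,
      ∀ b ∈ (c₁.toSubgraph ⊓ c₂.toSubgraph).verts,
      (c₁.toSubgraph ⊓ c₂.toSubgraph).spanningCoe.Reachable a b
  · exact Or.inl (Stmt12Aux.caseB w hw g c₁ c₂ h₁ h₂ hw₁ hw₂ hne hshare hconn)
  · push_neg at hconn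
    obtain ⟨s, hs, t, ht, hnr⟩ := hconn
    obtain ⟨hst, hverts, rest⟩ :=
      Stmt12Aux.caseA w hw g hgirth_le c₁ c₂ h₁ h₂ hw₁ hw₂ hs ht hnr
    exact Or.inr ⟨s, t, hst, hverts, rest⟩
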